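/- In any transposed Novikov-Poisson algebra (A,·,∘), the identity (x∘y)·z = (x∘z)·y holds for all x,y,z ∈ A. -/
import Mathlib


/-- In a transposed Novikov-Poisson algebra, (x∘y)·z = (x∘z)·y. -/
theorem stmt8 {k A : Type*} [Field k] [AddCommGroup A] [Module k A]
    (hchar : (2:k) ≠ 0)
    (mul cir : A →ₗ[k] A →ₗ[k] A)
    (hcomm : ∀ x y : A, mul x y = mul y x)
    (hassoc : ∀ x y z : A, mul (mul x y) z = mul x (mul y z))
    (hnov1 : ∀ x y z : A, cir (cir x y) z = cir (cir x z) y)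
    (hnov2 : ∀ x y z : A, cir (cir x y) z - cir x (cir y z) = cir (cir y x) z - cir y (cir x z))
    (htnp1 : ∀ x y z : A, cir (mul x y) z = cir (mul x z) y)
    (htnp2 : ∀ x y z : A, (2:k) • mul z (cir x y) = cir (mul z x) y + cir x (mul z y)) :
    ∀ x y z : A, mul (cir x y) z = mul (cir x z) y := by
  intro x y z
  have key : (2:k) • mul z (cir x y) = (2:k) • mul y (cir x z) := by
    rw [htnp2, htnp2, htnp1 z x y, htnp1 y x z, hcomm z y]
  have h2 : mul z (cir x y) = mul y (cir x z) := by
    have := congrArg (fun a => (2:k)⁻¹ • a) key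
    simpa [smul_smul, inv_mul_cancel₀ hchar] using this
  rw [hcomm (cir x y) z, hcomm (cir x z) y, h2]
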